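/- Let (r_1,...,r_d, s_1,...,s_{d'}) ∈ G_{I,σ} for (I,σ) ∈ W_d. If j ∈ J_σ := {j ∈ [d'−1] : σ^{-1}(j) < σ^{-1}(j+1)} then s_j > 0, and if j ∈ [d'−1] ∖ J_σ then s_j = 0. -/
import Mathlib


open scoped Classical

namespace FreeNilpotent

/-- `d' = binom(d,2)`, the rank of the derived subalgebra of `f_{2,d}`. -/
def d' (d : ℕ) : ℕ := d * (d - 1) / 2

/-- The indexing bijection `b` on pairs: `b(i,j) = d' + j − 1 + (i−1)(2d−2−i)/2`. -/
def bmap (d i j : ℕ) : ℕ := d' d + j - 1 + (i - 1) * (2 * d - 2 - i) / 2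

/-- The set of pairs `(i,j)` with `1 ≤ i < j ≤ d`. -/
def pairs (d : ℕ) : Finset (ℕ × ℕ) :=
  (Finset.Icc 1 d ×ˢ Finset.Icc 1 d).filter fun p => p.1 < p.2

/-- The corresponding tuple `v_i ∈ ℕ₀^{d+d'}` (1-based coordinates `l`):
for `i ∈ [d']`, `v_i = (0^{d+i−1}, 1^{d'−i+1})`; for `i = b(j,k)` with `j < k ≤ d`,
`v_i = (0^{j−1}, 1^{k−j}, 2^{d−k+1}, 0^{d'})`. -/
def v (d i l : ℕ) : ℕ :=
  if i ≤ d' d then (if d + i ≤ l ∧ l ≤ d + d' d then 1 else 0)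
  else ∑ p ∈ (pairs d).filter (fun p => bmap d p.1 p.2 = i),
    ((if p.1 ≤ l ∧ l ≤ d then 1 else 0) + (if p.2 ≤ l ∧ l ≤ d then 1 else 0))

/-- `σ : ℕ → ℕ` is (the one-line form of) a permutation of `[2d'] = {1, …, 2d'}`. -/
def IsPermOn (d : ℕ) (σ : ℕ → ℕ) : Prop :=
  Set.BijOn σ (Set.Icc 1 (2 * d' d)) (Set.Icc 1 (2 * d' d))

/-- Membership in the set `𝒮_{2d'}` of permutations. -/
def memS (d : ℕ) (σ : ℕ → ℕ) : Prop :=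
  IsPermOn d σ ∧
  (∀ i ∈ Finset.Icc 1 (2 * d' d),
    ((Finset.Icc 1 i).filter fun l => σ l ≤ d' d).card ≤
      ((Finset.Icc 1 i).filter fun l => d' d < σ l).card) ∧
  (∀ i j, 1 ≤ i → i < j → j ≤ 2 * d' d → σ i ≤ d' d → σ j ≤ d' d → σ j < σ i →
    ∀ k, i ≤ k → k < j → σ (k + 1) < σ k)

/-- The linear form `∑_j w^σ_{i,j} r_j + ∑_j w^σ_{i,d+j} s_j` with
`w^σ_{i,·} = v_{σ(i)} − v_{σ(i+1)}`. -/
def wform (d : ℕ) (σ : ℕ → ℕ) (i : ℕ) (r s : ℕ → ℕ) : ℤ :=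
  (∑ j ∈ Finset.Icc 1 d, ((v d (σ i) j : ℤ) - (v d (σ (i + 1)) j : ℤ)) * (r j : ℤ)) +
    ∑ j ∈ Finset.Icc 1 (d' d),
      ((v d (σ i) (d + j) : ℤ) - (v d (σ (i + 1)) (d + j) : ℤ)) * (s j : ℤ)

/-- Membership of a tuple `(r,s) ∈ ℕ₀^{d+d'}` (encoded as functions with
`r` supported on `[d]` and `s` on `[d']`) in the set `G_{I,σ}`. -/
def memG (d : ℕ) (I : Finset ℕ) (σ : ℕ → ℕ) (r s : ℕ → ℕ) : Prop :=
  (∀ i ∈ I, 0 < r i) ∧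
  (∀ i, 1 ≤ i → i ≤ d - 1 → i ∉ I → r i = 0) ∧
  (∀ i, 1 ≤ i → i ≤ 2 * d' d - 1 → σ i < σ (i + 1) → 0 < wform d σ i r s) ∧
  (∀ i, 1 ≤ i → i ≤ 2 * d' d - 1 → σ (i + 1) < σ i → 0 ≤ wform d σ i r s) ∧
  (∀ j, d < j → r j = 0) ∧ (∀ j, d' d < j → s j = 0)

/-- Membership of `(I,σ)` in the set `𝒲_d`: `I ⊆ [d−1]`, `σ ∈ 𝒮_{2d'}`, and the
associated system has nonzero solutions (equivalently, `G_{I,σ}` is nonempty). -/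
def memW (d : ℕ) (I : Finset ℕ) (σ : ℕ → ℕ) : Prop :=
  I ⊆ Finset.Icc 1 (d - 1) ∧ memS d σ ∧ ∃ r s, memG d I σ r s

/-- `j ∈ J_σ`, i.e. `σ^{-1}(j) < σ^{-1}(j+1)`. -/
def Jmem (d : ℕ) (σ : ℕ → ℕ) (j : ℕ) : Prop :=
  Function.invFunOn σ (Set.Icc 1 (2 * d' d)) j <
    Function.invFunOn σ (Set.Icc 1 (2 * d' d)) (j + 1)

/-- The linear functional `F(x) = ∑ v_x(l) r_l + ∑ v_x(d+l) s_l`. -/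
def F (d x : ℕ) (r s : ℕ → ℕ) : ℤ :=
  (∑ l ∈ Finset.Icc 1 d, (v d x l : ℤ) * r l) +
    ∑ l ∈ Finset.Icc 1 (d' d), (v d x (d + l) : ℤ) * s l

lemma wform_eq (d : ℕ) (σ : ℕ → ℕ) (i : ℕ) (r s : ℕ → ℕ) :
    wform d σ i r s = F d (σ i) r s - F d (σ (i + 1)) r s := by
  simp only [wform, F, sub_mul, Finset.sum_sub_distrib]
  ring

lemma F_of_small (d x : ℕ) (hx1 : 1 ≤ x) (hx : x ≤ d' d) (r s : ℕ → ℕ) :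
    F d x r s = ∑ l ∈ Finset.Icc x (d' d), (s l : ℤ) := by
  have h1 : ∑ l ∈ Finset.Icc 1 d, (v d x l : ℤ) * r l = 0 := by
    apply Finset.sum_eq_zero
    intro l hl
    simp only [Finset.mem_Icc] at hl
    have hv : v d x l = 0 := by
      unfold v
      rw [if_pos hx, if_neg (by omega)]
    rw [hv]; simp
  have h2 : ∀ l ∈ Finset.Icc 1 (d' d),
      (v d x (d + l) : ℤ) * s l = (if x ≤ l then (s l : ℤ) else 0) := by
    intro l hl
    simp only [Finset.mem_Icc] at hl
    unfold v
    rw [if_pos hx]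
    by_cases h : x ≤ l
    · rw [if_pos ⟨by omega, by omega⟩, if_pos h]; simp
    · rw [if_neg (by omega), if_neg h]; simp
  unfold F
  rw [h1, Finset.sum_congr rfl h2, zero_add, ← Finset.sum_filter]
  congr 1
  ext l
  simp only [Finset.mem_filter, Finset.mem_Icc]
  omega

lemma F_sub (d j : ℕ) (hj1 : 1 ≤ j) (hj : j + 1 ≤ d' d) (r s : ℕ → ℕ) :
    F d j r s - F d (j + 1) r s = s j := by
  rw [F_of_small d j hj1 (by omega) r s, F_of_small d (j + 1) (by omega) hj r s,
    Finset.Icc_add_one_left_eq_Ioc, Finset.Icc_eq_cons_Ioc (by omega : j ≤ d' d), Finset.sum_cons]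
  ring

lemma telescope (f : ℕ → ℤ) : ∀ a b : ℕ, a ≤ b →
    Finset.sum (Finset.Ico a b) (fun i => f i - f (i + 1)) = f a - f b := by
  intro a b
  induction b with
  | zero => intro h; simp [Nat.le_zero.mp h]
  | succ b ih =>
    intro h
    rcases Nat.lt_or_ge a (b + 1) with h' | h'
    · have hab : a ≤ b := by omega
      rw [Finset.sum_Ico_succ_top hab, ih hab]; ring
    · have : a = b + 1 := by omega
      simp [this]

/-- for `(I,σ) ∈ 𝒲_d` and `(r,s) ∈ G_{I,σ}`, if `j ∈ J_σ` then `s_j > 0`,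
and if `j ∈ [d'−1] ∖ J_σ` then `s_j = 0`. -/
theorem sj_pos_iff_Jsigma (d : ℕ) (hd : 2 ≤ d) (I : Finset ℕ) (σ : ℕ → ℕ)
    (hW : memW d I σ) (r s : ℕ → ℕ) (hG : memG d I σ r s)
    (j : ℕ) (hj1 : 1 ≤ j) (hj2 : j ≤ d' d - 1) :
    (Jmem d σ j → 0 < s j) ∧ (¬ Jmem d σ j → s j = 0) := by
  obtain ⟨hI, ⟨hperm, hS2, hS3⟩, hEx⟩ := hW
  obtain ⟨hGr, hG0, hasc, hdesc, hr0, hs0⟩ := hG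
  have hd' : 1 ≤ d' d := by
    have h2 : 2 * 1 ≤ d * (d - 1) := Nat.mul_le_mul hd (by omega)
    have : 1 ≤ d * (d - 1) / 2 := by omega
    exact this
  have hjd : j + 1 ≤ d' d := by omega
  set p := Function.invFunOn σ (Set.Icc 1 (2 * d' d)) j with hpdef
  set q := Function.invFunOn σ (Set.Icc 1 (2 * d' d)) (j + 1) with hqdef
  have hpex : ∃ a ∈ Set.Icc 1 (2 * d' d), σ a = j := by
    obtain ⟨a, ha, hae⟩ := hperm.surjOn (show j ∈ Set.Icc 1 (2 * d' d) from Set.mem_Icc.mpr ⟨hj1, by omega⟩)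
    exact ⟨a, ha, hae⟩
  have hqex : ∃ a ∈ Set.Icc 1 (2 * d' d), σ a = j + 1 := by
    obtain ⟨a, ha, hae⟩ := hperm.surjOn
      (show j + 1 ∈ Set.Icc 1 (2 * d' d) from Set.mem_Icc.mpr ⟨by omega, by omega⟩)
    exact ⟨a, ha, hae⟩
  have hpmem : p ∈ Set.Icc 1 (2 * d' d) := Function.invFunOn_mem hpex
  have hqmem : q ∈ Set.Icc 1 (2 * d' d) := Function.invFunOn_mem hqex
  have hσp : σ p = j := Function.invFunOn_eq hpex
  have hσq : σ q = j + 1 := Function.invFunOn_eq hqex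
  rw [Set.mem_Icc] at hpmem hqmem
  have hpq : p ≠ q := by
    intro h
    rw [h, hσq] at hσp
    omega
  have hkey : ∀ a b : ℕ, a ≤ b →
      ∑ i ∈ Finset.Ico a b, wform d σ i r s = F d (σ a) r s - F d (σ b) r s := by
    intro a b hab
    rw [← telescope (fun x => F d (σ x) r s) a b hab]
    exact Finset.sum_congr rfl fun i _ => wform_eq d σ i r s
  have hnonneg : ∀ a b : ℕ, 1 ≤ a → b ≤ 2 * d' d →
      ∀ i ∈ Finset.Ico a b, 0 ≤ wform d σ i r s := by
    intro a b ha hb i hi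
    simp only [Finset.mem_Ico] at hi
    have hi1 : 1 ≤ i := le_trans ha hi.1
    have hi2 : i ≤ 2 * d' d - 1 := by omega
    have hne : σ i ≠ σ (i + 1) := by
      intro h
      have := hperm.injOn (Set.mem_Icc.mpr ⟨hi1, by omega⟩)
        (Set.mem_Icc.mpr ⟨by omega, by omega⟩) h
      omega
    rcases lt_or_gt_of_ne hne with h | h
    · exact le_of_lt (hasc i hi1 hi2 h)
    · exact hdesc i hi1 hi2 h
  constructor
  · intro hJ
    rw [Jmem, ← hpdef, ← hqdef] at hJ
    have hsum : ∑ i ∈ Finset.Ico p q, wform d σ i r s = (s j : ℤ) := by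
      rw [hkey p q (le_of_lt hJ), hσp, hσq, F_sub d j hj1 hjd]
    have hex2 : ∃ i ∈ Finset.Ico p q, 0 < wform d σ i r s := by
      by_contra hno
      push_neg at hno
      have hdec : ∀ k : ℕ, p + k ≤ q → σ (p + k) + k ≤ σ p := by
        intro k
        induction k with
        | zero => simp
        | succ k ih =>
          intro hk
          have hmem : p + k ∈ Finset.Ico p q := Finset.mem_Ico.mpr ⟨by omega, by omega⟩
          have hi1 : 1 ≤ p + k := by omega
          have hi2 : p + k ≤ 2 * d' d - 1 := by omega
          have hnotasc : ¬ (σ (p + k) < σ (p + k + 1)) := by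
            intro hlt
            exact absurd (hasc (p + k) hi1 hi2 hlt) (not_lt.mpr (hno _ hmem))
          have hne : σ (p + k) ≠ σ (p + k + 1) := by
            intro h
            have := hperm.injOn (Set.mem_Icc.mpr ⟨hi1, by omega⟩)
              (Set.mem_Icc.mpr ⟨by omega, by omega⟩) h
            omega
          have h1 := ih (by omega)
          have h2 : σ (p + k + 1) < σ (p + k) := by omega
          have : p + (k + 1) = p + k + 1 := by omega
          rw [this]
          omega
      have := hdec (q - p) (by omega)
      rw [show p + (q - p) = q by omega, hσp, hσq] at this
      omega
    have hpos : 0 < (s j : ℤ) := by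
      rw [← hsum]
      exact Finset.sum_pos' (hnonneg p q hpmem.1 hqmem.2) hex2
    exact_mod_cast hpos
  · intro hJ
    rw [Jmem, ← hpdef, ← hqdef] at hJ
    have hqp : q < p := by
      rcases lt_trichotomy p q with h | h | h
      · exact absurd h hJ
      · exact absurd h hpq
      · exact h
    have h1 : (0 : ℤ) ≤ ∑ i ∈ Finset.Ico q p, wform d σ i r s :=
      Finset.sum_nonneg (hnonneg q p hqmem.1 hpmem.2)
    rw [hkey q p (le_of_lt hqp), hσp, hσq] at h1
    have h2 := F_sub d j hj1 hjd r s
    have h3 : (s j : ℤ) ≤ 0 := by linarith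
    have h4 : (s j : ℤ) = 0 := le_antisymm h3 (by positivity)
    exact_mod_cast h4

end FreeNilpotent
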